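/- arXiv:2206.02068 — 2 statements merged into one kernel-verified Lean document; each statement's English description precedes it below -/
import Mathlib

section
/- Let P be a nonempty countable family of probability distributions on ℕ, each with all components positive. Then BS(P) = ⋂_{p ∈ P} BS(p) is dense in S with respect to the topology on S induced by the ℓ¹-norm. -/
/-- The set of probability distributions on `ℕ`, as a subset of the Banach space `ℓ¹`. -/
def S : Set (lp (fun _ : ℕ => ℝ) 1) :=
  {q | (∀ i, 0 ≤ q i) ∧ HasSum (fun i => q i) 1}

/-- The Bayes blind spot of `p`, as a subset of `S` (with its ℓ¹-subspace topology). -/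
def BS (p : ℕ → ℝ) : Set S := {q | Function.Injective fun i => q.1 i / p i}

section Aux

noncomputable abbrev L1 := lp (fun _ : ℕ => ℝ) 1

lemma l1_hasSum_norm (f : L1) : HasSum (fun i => |f i|) ‖f‖ := by
  have := lp.hasSum_norm (p := 1) (by norm_num) f
  simpa using this

lemma l1_summable (f : L1) : Summable fun i => f i :=
  (l1_hasSum_norm f).summable.of_abs


lemma l1_single_apply (a : ℕ) (t : ℝ) (m : ℕ) :
    (lp.single 1 a t : L1) m = if m = a then t else 0 := by
  by_cases hm : m = a
  · subst hm; simp [lp.single_apply_self]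
  · rw [if_neg hm]
    exact lp.single_apply_ne (E := fun _ : ℕ => ℝ) 1 a t hm

lemma coord_lipschitz (i : ℕ) : LipschitzWith 1 (fun f : L1 => f i) := by
  refine LipschitzWith.of_dist_le_mul fun f g => ?_
  rw [dist_eq_norm, dist_eq_norm, NNReal.coe_one, one_mul]
  have := lp.norm_apply_le_norm (E := fun _ : ℕ => ℝ) (p := 1) one_ne_zero (f - g) i
  simpa using this

lemma sum_lipschitz : LipschitzWith 1 (fun f : L1 => ∑' i, f i) := by
  refine LipschitzWith.of_dist_le_mul fun f g => ?_
  rw [dist_eq_norm, dist_eq_norm, NNReal.coe_one, one_mul]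
  have h1 : (fun i => f i - g i) = fun i => (f - g) i := by
    funext m; simp
  have h2 : ‖∑' i, (f - g) i‖ ≤ ∑' i, ‖(f - g) i‖ :=
    norm_tsum_le_tsum_norm (by simpa using (l1_hasSum_norm (f - g)).summable)
  calc ‖∑' i, f i - ∑' i, g i‖ = ‖∑' i, (f - g) i‖ := by
        rw [← Summable.tsum_sub (l1_summable f) (l1_summable g), h1]
    _ ≤ ∑' i, ‖(f - g) i‖ := h2
    _ = ‖f - g‖ := by
        simpa [Real.norm_eq_abs] using (l1_hasSum_norm (f - g)).tsum_eq

lemma isClosed_S : IsClosed S := by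
  have h1 : IsClosed {q : L1 | ∀ i, 0 ≤ q i} := by
    rw [Set.setOf_forall]
    exact isClosed_iInter fun i =>
      isClosed_le continuous_const (coord_lipschitz i).continuous
  have h2 : IsClosed {q : L1 | HasSum (fun i => q i) 1} := by
    have he : {q : L1 | HasSum (fun i => q i) 1} = (fun q : L1 => ∑' i, q i) ⁻¹' {1} := by
      ext q
      simp [Set.mem_setOf_eq, (l1_summable q).hasSum_iff]
    rw [he]
    exact IsClosed.preimage sum_lipschitz.continuous isClosed_singleton
  exact h1.inter h2

instance : CompleteSpace S := isClosed_S.completeSpace_coe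

/-- Perturb a distribution by moving mass `t` from coordinate `b` to coordinate `a`. -/
lemma perturb (q : S) {a b : ℕ} (hab : a ≠ b) {t : ℝ} (ht : 0 < t) (htb : t ≤ q.1 b) :
    ∃ q' : S, dist q' q ≤ 2 * t ∧ (∀ m, m ≠ a → m ≠ b → q'.1 m = q.1 m) ∧
      q'.1 a = q.1 a + t ∧ q'.1 b = q.1 b - t := by
  classical
  set v : L1 := lp.single 1 a t - lp.single 1 b t with hv
  have hva : v a = t := by
    simp [hv, l1_single_apply, hab]
  have hvb : v b = -t := by
    simp [hv, l1_single_apply, Ne.symm hab]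
  have hvm : ∀ m, m ≠ a → m ≠ b → v m = 0 := by
    intro m hma hmb
    simp [hv, l1_single_apply, hma, hmb]
  have hnorm : ‖v‖ ≤ 2 * t := by
    have h1 : ‖(lp.single 1 a t : L1)‖ = |t| := by
      simpa using lp.norm_single (p := 1) (E := fun _ : ℕ => ℝ) (by norm_num)
        (fun _ => t) a
    have h2 : ‖(lp.single 1 b t : L1)‖ = |t| := by
      simpa using lp.norm_single (p := 1) (E := fun _ : ℕ => ℝ) (by norm_num)
        (fun _ => t) b
    calc ‖v‖ ≤ ‖(lp.single 1 a t : L1)‖ + ‖(lp.single 1 b t : L1)‖ := norm_sub_le _ _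
      _ = |t| + |t| := by rw [h1, h2]
      _ = 2 * t := by rw [abs_of_pos ht]; ring
  have hvsum : HasSum (fun m => v m) 0 := by
    have ha : HasSum (fun m => ((lp.single 1 a t : L1) m)) t := by
      have : (fun m => ((lp.single 1 a t : L1) m)) = fun m => if m = a then t else 0 := by
        funext m; exact l1_single_apply a t m
      rw [this]; exact hasSum_ite_eq a t
    have hb : HasSum (fun m => ((lp.single 1 b t : L1) m)) t := by
      have : (fun m => ((lp.single 1 b t : L1) m)) = fun m => if m = b then t else 0 := by
        funext m; exact l1_single_apply b t m
      rw [this]; exact hasSum_ite_eq b t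
    have := ha.sub hb
    simpa [hv] using this
  have hq' : (q.1 + v : L1) ∈ S := by
    constructor
    · intro m
      by_cases hma : m = a
      · subst hma
        have h1 := q.2.1 m
        simp only [lp.coeFn_add, Pi.add_apply, hva]
        linarith
      · by_cases hmb : m = b
        · subst hmb
          simp only [lp.coeFn_add, Pi.add_apply, hvb]
          linarith
        · simp only [lp.coeFn_add, Pi.add_apply, hvm m hma hmb, add_zero]
          exact q.2.1 m
    · have := q.2.2.add hvsum
      simpa using this
  refine ⟨⟨q.1 + v, hq'⟩, ?_, ?_, ?_, ?_⟩
  · rw [Subtype.dist_eq, dist_eq_norm]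
    simpa using hnorm
  · intro m hma hmb
    simp [hvm m hma hmb]
  · simp [hva]
  · simp [hvb]; ring

lemma dense_good (p : ℕ → ℝ) (hp : ∀ i, 0 < p i) {i j : ℕ} (hij : i ≠ j) :
    Dense {q : S | q.1 i * p j ≠ q.1 j * p i} := by
  rw [Metric.dense_iff]
  intro q ε hε
  by_cases h0 : q.1 i * p j ≠ q.1 j * p i
  · exact ⟨q, Metric.mem_ball_self hε, h0⟩
  push_neg at h0
  obtain ⟨b, hb⟩ : ∃ b, 0 < q.1 b := by
    by_contra h
    push_neg at h
    have hz : (fun m => q.1 m) = fun _ => (0 : ℝ) := by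
      funext m; exact le_antisymm (h m) (q.2.1 m)
    have := q.2.2
    rw [hz] at this
    simpa using this.unique hasSum_zero
  have hpi := hp i
  have hpj := hp j
  by_cases hbi : b = i
  · subst hbi
    set t := min (q.1 b) (ε / 3) with htdef
    have ht : 0 < t := lt_min hb (by linarith)
    obtain ⟨q', hd, _, hqa, hqb⟩ := perturb q (Ne.symm hij) ht (min_le_left _ _)
    refine ⟨q', ?_, ?_⟩
    · rw [Metric.mem_ball]
      have : t ≤ ε / 3 := min_le_right _ _
      calc dist q' q ≤ 2 * t := hd
        _ < ε := by linarith
    · simp only [Set.mem_setOf_eq, hqa, hqb]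
      intro hcon
      nlinarith [mul_pos ht hpi, mul_pos ht hpj]
  · set t := min (q.1 b) (ε / 3) with htdef
    have ht : 0 < t := lt_min hb (by linarith)
    obtain ⟨q', hd, hother, hqa, hqb⟩ := perturb q (fun h => hbi h.symm) ht (min_le_left _ _)
    refine ⟨q', ?_, ?_⟩
    · rw [Metric.mem_ball]
      have : t ≤ ε / 3 := min_le_right _ _
      calc dist q' q ≤ 2 * t := hd
        _ < ε := by linarith
    · simp only [Set.mem_setOf_eq, hqa]
      by_cases hbj : b = j
      · subst hbj
        rw [hqb]
        intro hcon
        nlinarith [mul_pos ht hpi, mul_pos ht hpj]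
      · rw [hother j (Ne.symm hij) (fun h => hbj h.symm)]
        intro hcon
        nlinarith

end Aux

/-- For a nonempty countable family `P` of probability distributions
on `ℕ`, each with all components positive, `BS(P) = ⋂_{p ∈ P} BS(p)` is dense in `S`
for the ℓ¹-subspace topology. -/
theorem bayes_blind_spot_inter_stmt12 (P : Set (ℕ → ℝ))
    (hPne : P.Nonempty) (hPcount : P.Countable)
    (hPpos : ∀ p ∈ P, ∀ i, 0 < p i) (hPsum : ∀ p ∈ P, HasSum p 1) :
    Dense (⋂ p ∈ P, BS p) := by
  classical
  set T : Set ((ℕ → ℝ) × ℕ × ℕ) := {x | x.1 ∈ P ∧ x.2.1 ≠ x.2.2} with hT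
  have hTc : T.Countable := by
    have hsub : T ⊆ P ×ˢ (Set.univ : Set (ℕ × ℕ)) := fun x hx => ⟨hx.1, trivial⟩
    exact (hPcount.prod Set.countable_univ).mono hsub
  have hdense : Dense (⋂ x ∈ T,
      {q : S | q.1 x.2.1 * x.1 x.2.2 ≠ q.1 x.2.2 * x.1 x.2.1}) := by
    refine dense_biInter_of_isOpen ?_ hTc ?_
    · rintro x ⟨hx1, hx2⟩
      have hc1 : Continuous fun q : S => q.1 x.2.1 * x.1 x.2.2 :=
        (((coord_lipschitz x.2.1).continuous).comp continuous_subtype_val).mul continuous_const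
      have hc2 : Continuous fun q : S => q.1 x.2.2 * x.1 x.2.1 :=
        (((coord_lipschitz x.2.2).continuous).comp continuous_subtype_val).mul continuous_const
      exact (isClosed_eq hc1 hc2).isOpen_compl
    · rintro x ⟨hx1, hx2⟩
      exact dense_good x.1 (hPpos x.1 hx1) hx2
  refine hdense.mono ?_
  intro q hq
  rw [Set.mem_iInter₂] at hq
  rw [Set.mem_iInter₂]
  intro p hp
  intro m n hmn
  by_contra hne
  have h1 := hq (p, m, n) ⟨hp, hne⟩
  apply h1
  simp only at hmn
  exact (div_eq_div_iff (hPpos p hp m).ne' (hPpos p hp n).ne').mp hmn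
end

section
/- There exists a probability measure M on S (equipped with the Borel σ-algebra of the ℓ¹-subspace topology) such that for every probability distribution p on ℕ with p_i > 0 for all i, the Bayes blind spot BS(p) has M-measure 1. -/
open MeasureTheory

namespace BayesAux

noncomputable section

/-- The geometric distribution with parameter `t`. -/
def geom (t : ℝ) : ℕ → ℝ := fun i => (1 - t) * t ^ i

lemma geom_nonneg {t : ℝ} (ht : t ∈ Set.Ioo (0 : ℝ) 1) (i : ℕ) : 0 ≤ geom t i :=
  mul_nonneg (by linarith [ht.2]) (pow_nonneg ht.1.le i)

lemma geom_hasSum {t : ℝ} (ht : t ∈ Set.Ioo (0 : ℝ) 1) : HasSum (geom t) 1 := by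
  have h := (hasSum_geometric_of_lt_one ht.1.le ht.2).mul_left (1 - t)
  have h1 : (1 - t) * (1 - t)⁻¹ = 1 :=
    mul_inv_cancel₀ (by linarith [ht.2] : (1 : ℝ) - t ≠ 0)
  rw [h1] at h
  exact h

lemma geom_memℓp {t : ℝ} (ht : t ∈ Set.Ioo (0 : ℝ) 1) : Memℓp (geom t) 1 := by
  apply memℓp_gen
  have hs : Summable (geom t) := (geom_hasSum ht).summable
  have h2 : ∀ i, ‖geom t i‖ ^ (1 : ENNReal).toReal = geom t i := fun i => by
    simp [Real.norm_eq_abs, abs_of_nonneg (geom_nonneg ht i)]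
  exact (summable_congr h2).2 hs

lemma half_mem : (1 / 2 : ℝ) ∈ Set.Ioo (0 : ℝ) 1 := by norm_num

/-- The curve of geometric distributions, in `ℓ¹`. -/
def glp : ℝ → lp (fun _ : ℕ => ℝ) 1 := fun t =>
  if h : t ∈ Set.Ioo (0 : ℝ) 1 then ⟨geom t, geom_memℓp h⟩ else ⟨geom (1 / 2), geom_memℓp half_mem⟩

lemma glp_apply {t : ℝ} (h : t ∈ Set.Ioo (0 : ℝ) 1) (i : ℕ) : glp t i = geom t i := by
  simp only [glp, dif_pos h]

lemma glp_mem (t : ℝ) : glp t ∈ S := by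
  by_cases h : t ∈ Set.Ioo (0 : ℝ) 1
  · exact ⟨fun i => by rw [glp_apply h]; exact geom_nonneg h i,
      by simpa only [funext fun i => glp_apply h i] using geom_hasSum h⟩
  · have : glp t = ⟨geom (1 / 2), geom_memℓp half_mem⟩ := by simp only [glp, dif_neg h]
    rw [this]
    exact ⟨fun i => geom_nonneg half_mem i, geom_hasSum half_mem⟩

/-- The curve of geometric distributions, as a map into `S`. -/
def g : ℝ → ↥S := fun t => ⟨glp t, glp_mem t⟩

lemma norm_lp_eq (f : lp (fun _ : ℕ => ℝ) 1) : ‖f‖ = ∑' i, |f i| := by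
  have h := lp.norm_eq_tsum_rpow (p := 1) (by norm_num) f
  simpa [Real.rpow_one, Real.norm_eq_abs] using h

lemma continuousOn_glp : ContinuousOn glp (Set.Ioo 0 1) := by
  intro t₀ ht₀
  rw [ContinuousWithinAt, tendsto_iff_norm_sub_tendsto_zero]
  set b : ℝ := (1 + t₀) / 2 with hb
  have hb0 : 0 < b := by have := ht₀.1; simp only [hb]; linarith
  have hb1 : b < 1 := by have := ht₀.2; simp only [hb]; linarith
  have ht₀b : t₀ < b := by have := ht₀.1; have := ht₀.2; simp only [hb]; linarith
  have hmem : ∀ᶠ s in nhdsWithin t₀ (Set.Ioo 0 1), s ∈ Set.Ioo (0 : ℝ) 1 ∧ s < b := by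
    filter_upwards [self_mem_nhdsWithin,
      eventually_nhdsWithin_of_eventually_nhds (eventually_lt_nhds ht₀b)] with s h1 h2
    exact ⟨h1, h2⟩
  have key : Filter.Tendsto (fun s => ∑' i, |geom s i - geom t₀ i|)
      (nhdsWithin t₀ (Set.Ioo 0 1)) (nhds 0) := by
    have h0 : Filter.Tendsto (fun s => ∑' i, |geom s i - geom t₀ i|)
        (nhdsWithin t₀ (Set.Ioo 0 1)) (nhds (∑' _ : ℕ, (0 : ℝ))) := by
      apply tendsto_tsum_of_dominated_convergence (bound := fun i => 2 * b ^ i)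
      · exact (summable_geometric_of_lt_one hb0.le hb1).mul_left 2
      · intro i
        have hc : Filter.Tendsto (fun s : ℝ => geom s i) (nhds t₀) (nhds (geom t₀ i)) := by
          have : Continuous fun s : ℝ => (1 - s) * s ^ i :=
            (continuous_const.sub continuous_id).mul (continuous_pow i)
          exact this.tendsto t₀
        have := (hc.sub_const (geom t₀ i)).abs
        simpa using this.mono_left nhdsWithin_le_nhds
      · filter_upwards [hmem] with s hs i
        have hsi : |geom s i| ≤ b ^ i := by
          rw [abs_of_nonneg (geom_nonneg hs.1 i)]
          calc geom s i ≤ 1 * s ^ i := by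
                unfold geom
                apply mul_le_mul_of_nonneg_right (by linarith [hs.1.1]) (pow_nonneg hs.1.1.le i)
            _ = s ^ i := one_mul _
            _ ≤ b ^ i := pow_le_pow_left₀ hs.1.1.le hs.2.le i
        have hti : |geom t₀ i| ≤ b ^ i := by
          rw [abs_of_nonneg (geom_nonneg ht₀ i)]
          calc geom t₀ i ≤ 1 * t₀ ^ i := by
                unfold geom
                apply mul_le_mul_of_nonneg_right (by linarith [ht₀.1]) (pow_nonneg ht₀.1.le i)
            _ = t₀ ^ i := one_mul _
            _ ≤ b ^ i := pow_le_pow_left₀ ht₀.1.le ht₀b.le i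
        calc ‖|geom s i - geom t₀ i|‖ = |geom s i - geom t₀ i| := by
              rw [Real.norm_eq_abs, abs_abs]
          _ ≤ |geom s i| + |geom t₀ i| := abs_sub _ _
          _ ≤ 2 * b ^ i := by linarith
    simpa using h0
  apply key.congr'
  filter_upwards [hmem] with s hs
  rw [norm_lp_eq]
  congr 1
  ext i
  rw [lp.coeFn_sub]
  simp only [Pi.sub_apply]
  rw [glp_apply hs.1, glp_apply ht₀]

lemma continuous_pow_sub_injOn {n : ℕ} (hn : n ≠ 0) :
    Set.InjOn (fun t : ℝ => t ^ n) (Set.Ioo 0 1) := by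
  intro a ha b hb hab
  exact (pow_left_strictMonoOn₀ hn).injOn (ha.1.le : a ∈ {x : ℝ | 0 ≤ x}) hb.1.le hab

/-- The bad set for a pair of indices. -/
lemma T_subsingleton {p : ℕ → ℝ} (hp : ∀ i, 0 < p i) {i j : ℕ} (hij : i < j) :
    Set.Subsingleton {t ∈ Set.Ioo (0 : ℝ) 1 | t ^ i * p j = t ^ j * p i} := by
  have key : ∀ t ∈ Set.Ioo (0 : ℝ) 1, t ^ i * p j = t ^ j * p i →
      t ^ (j - i) = p j / p i := by
    intro t ht heq
    have hti : (0 : ℝ) < t ^ i := pow_pos ht.1 i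
    have hsplit : t ^ j = t ^ i * t ^ (j - i) := by rw [← pow_add]; congr 1; omega
    rw [hsplit, mul_assoc] at heq
    have := mul_left_cancel₀ hti.ne' heq
    rw [this, mul_div_assoc, div_self (hp i).ne', mul_one]
  intro a ha b hb
  have h1 := key a ha.1 ha.2
  have h2 := key b hb.1 hb.2
  exact continuous_pow_sub_injOn (by omega : j - i ≠ 0) ha.1 hb.1
    (show a ^ (j - i) = b ^ (j - i) by rw [h1, h2])

end

end BayesAux

open BayesAux in
/-- There is a probability measure `M` on `S` (with the Borel σ-algebra
of the ℓ¹-subspace topology) such that for every probability distribution `p` on `ℕ` with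
all components positive, the Bayes blind spot `BS(p)` has `M`-measure `1`. -/
theorem exists_measure_bayes_blind_spot_full :
    ∃ M : @Measure ↥S (borel ↥S),
      @IsProbabilityMeasure ↥S (borel ↥S) M ∧
        ∀ p : ℕ → ℝ, (∀ i, 0 < p i) → HasSum p 1 → M (BS p) = 1 := by
  letI : MeasurableSpace ↥S := borel ↥S
  haveI : BorelSpace ↥S := ⟨rfl⟩
  set μ : Measure ℝ := volume.restrict (Set.Ioo 0 1) with hμdef
  haveI hμ : IsProbabilityMeasure μ := by
    constructor
    rw [hμdef, Measure.restrict_apply_univ, Real.volume_Ioo]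
    norm_num
  have hgcon : ContinuousOn g (Set.Ioo 0 1) := by
    intro t ht
    exact tendsto_subtype_rng.2 (continuousOn_glp t ht)
  have hg : AEMeasurable g μ := hgcon.aemeasurable measurableSet_Ioo
  refine ⟨Measure.map g μ, Measure.isProbabilityMeasure_map hg, ?_⟩
  intro p hp _
  -- continuity of coordinate evaluations on S
  have heval : ∀ i : ℕ, Continuous fun q : ↥S => q.1 i := by
    intro i
    have h1 : LipschitzWith 1 (fun f : lp (fun _ : ℕ => ℝ) 1 => f i) := by
      apply LipschitzWith.of_dist_le_mul
      intro f f'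
      rw [NNReal.coe_one, one_mul, dist_eq_norm, dist_eq_norm]
      calc ‖f i - f' i‖ = ‖(f - f') i‖ := by rw [lp.coeFn_sub]; rfl
        _ ≤ ‖f - f'‖ := lp.norm_apply_le_norm one_ne_zero (f - f') i
    exact h1.continuous.comp continuous_subtype_val
  -- BS p is measurable
  have hBSeq : BS p =
      (⋃ i : ℕ, ⋃ j : ℕ, ⋃ _ : i ≠ j, {q : ↥S | q.1 i / p i = q.1 j / p j})ᶜ := by
    ext q
    simp only [Set.mem_compl_iff, Set.mem_iUnion, Set.mem_setOf_eq, not_exists]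
    constructor
    · intro hq i j hij hqe
      exact hij (hq hqe)
    · intro hq a b hab
      by_contra h
      exact hq a b h hab
  have hBS : MeasurableSet (BS p) := by
    rw [hBSeq]
    refine MeasurableSet.compl ?_
    refine MeasurableSet.iUnion fun i => MeasurableSet.iUnion fun j =>
      MeasurableSet.iUnion fun _ => ?_
    exact (isClosed_eq ((heval i).div_const (p i)) ((heval j).div_const (p j))).measurableSet
  rw [Measure.map_apply_of_aemeasurable hg hBS, hμdef,
    Measure.restrict_apply' measurableSet_Ioo]
  -- the bad parameter set
  set B : Set ℝ :=
    ⋃ i : ℕ, ⋃ j : ℕ, ⋃ _ : i < j, {t ∈ Set.Ioo (0 : ℝ) 1 | t ^ i * p j = t ^ j * p i}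
    with hBdef
  have hBc : B.Countable := by
    refine Set.countable_iUnion fun i => Set.countable_iUnion fun j =>
      Set.countable_iUnion fun hij => ?_
    exact (T_subsingleton hp hij).countable
  have hsub : Set.Ioo (0 : ℝ) 1 \ B ⊆ g ⁻¹' BS p ∩ Set.Ioo 0 1 := by
    intro t ht
    refine ⟨?_, ht.1⟩
    intro a b hab
    simp only at hab
    by_contra hne
    -- wlog a < b
    have hkey : ∀ a b : ℕ, a < b → (g t).1 a / p a = (g t).1 b / p b → False := by
      intro a b hlt heq
      apply ht.2
      rw [hBdef]
      refine Set.mem_iUnion.2 ⟨a, Set.mem_iUnion.2 ⟨b, Set.mem_iUnion.2 ⟨hlt, ht.1, ?_⟩⟩⟩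
      have hga : (g t).1 a = geom t a := glp_apply ht.1 a
      have hgb : (g t).1 b = geom t b := glp_apply ht.1 b
      rw [hga, hgb] at heq
      have h1 : geom t a * p b = geom t b * p a :=
        (div_eq_div_iff (hp a).ne' (hp b).ne').1 heq
      unfold geom at h1
      have h1t : (1 : ℝ) - t ≠ 0 := by have := ht.1.2; intro h; linarith [sub_eq_zero.1 h]
      have : (1 - t) * (t ^ a * p b) = (1 - t) * (t ^ b * p a) := by
        rw [← mul_assoc, ← mul_assoc]; exact h1
      exact mul_left_cancel₀ h1t this
    rcases lt_or_gt_of_ne hne with h | h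
    · exact hkey a b h hab
    · exact hkey b a h hab.symm
  apply le_antisymm
  · calc volume (g ⁻¹' BS p ∩ Set.Ioo 0 1) ≤ volume (Set.Ioo (0 : ℝ) 1) :=
        measure_mono Set.inter_subset_right
      _ = 1 := by rw [Real.volume_Ioo]; norm_num
  · calc (1 : ENNReal) = volume (Set.Ioo (0 : ℝ) 1 \ B) := by
          rw [measure_diff_null (hBc.measure_zero _), Real.volume_Ioo]; norm_num
      _ ≤ volume (g ⁻¹' BS p ∩ Set.Ioo 0 1) := measure_mono hsub
end
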